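/- Let W be a linear subspace of ℝ^n, let v, e ∈ ℝ^n be such that v + e ∈ W, every coordinate of v is either 0 or 2, v has at most s nonzero coordinates (s ≥ 1), and ‖e‖₂ ≤ α for some real α < 2. Then for every index i with v_i = 2, the i-th leverage score of W satisfies ‖P_W e_i‖₂² ≥ (2 − α)² / (2√s + α)². -/

import Mathlib

open scoped RealInnerProductSpace


/-- if v + e ∈ W where v is a {0,2}-valued vector with at most s
nonzero coordinates (s ≥ 1) and ‖e‖ ≤ α < 2, then every index i with v_i = 2 has
leverage score at least (2 − α)²/(2√s + α)². -/
theorem leverage_score_lower_bound_of_flat_sparse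
    (n s : ℕ) (hs : 1 ≤ s) (W : Submodule ℝ (EuclideanSpace ℝ (Fin n)))
    (v e : EuclideanSpace ℝ (Fin n)) (hmem : v + e ∈ W)
    (hflat : ∀ i, v i = 0 ∨ v i = 2)
    (hsparse : {i : Fin n | v i ≠ 0}.ncard ≤ s)
    (α : ℝ) (hα : ‖e‖ ≤ α) (hα2 : α < 2) :
    ∀ i : Fin n, v i = 2 →
      (2 - α) ^ 2 / (2 * Real.sqrt s + α) ^ 2 ≤
        ‖(Submodule.orthogonalProjection W (EuclideanSpace.single i 1) :
          EuclideanSpace ℝ (Fin n))‖ ^ 2 := by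
  intro i hi
  have hα0 : 0 ≤ α := le_trans (norm_nonneg _) hα
  set u : EuclideanSpace ℝ (Fin n) := v + e with hu
  set p : EuclideanSpace ℝ (Fin n) :=
    (Submodule.orthogonalProjection W (EuclideanSpace.single i 1) : EuclideanSpace ℝ (Fin n)) with hp
  -- |e i| ≤ α
  have hei : |e i| ≤ α := by
    have h1 : ⟪(EuclideanSpace.single i (1:ℝ)), e⟫ = e i := by
      simp [EuclideanSpace.inner_single_left]
    have h2 := abs_real_inner_le_norm (EuclideanSpace.single i (1:ℝ)) e
    rw [h1, EuclideanSpace.norm_single] at h2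
    simp only [norm_one, one_mul] at h2
    exact h2.trans hα
  -- inner product with u
  have hinner : ⟪p, u⟫ = u i := by
    have := Submodule.inner_orthogonalProjection_eq_of_mem_right (K := W)
      ⟨u, hmem⟩ (EuclideanSpace.single i (1:ℝ))
    simp only [Submodule.coe_inner] at this
    rw [hp, this]
    simp [EuclideanSpace.inner_single_left]
  have hui : 2 - α ≤ u i := by
    have : u i = 2 + e i := by simp [hu, hi]
    rw [this]
    have := abs_le.mp hei
    linarith [this.1]
  -- ‖v‖ ≤ 2 √s
  have hnv : ‖v‖ ≤ 2 * Real.sqrt s := by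
    have hsum : ∑ j, v j ^ 2 ≤ 4 * s := by
      classical
      set T := Finset.univ.filter (fun j => v j ≠ 0) with hT
      have hset : {j : Fin n | v j ≠ 0} = ↑T := by ext j; simp [hT]
      have hcard : T.card ≤ s := by
        rw [hset, Set.ncard_coe_finset] at hsparse; exact hsparse
      have : ∑ j, v j ^ 2 = ∑ j ∈ T, v j ^ 2 := by
        rw [Finset.sum_filter]
        apply Finset.sum_congr rfl
        intro j _
        by_cases h : v j = 0 <;> simp [h]
      rw [this]
      have : ∑ j ∈ T, v j ^ 2 ≤ ∑ j ∈ T, (4:ℝ) := by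
        apply Finset.sum_le_sum
        intro j hj
        rcases hflat j with h | h
        · simp [hT] at hj; exact absurd h hj
        · rw [h]; norm_num
      rw [Finset.sum_const, nsmul_eq_mul] at this
      calc ∑ j ∈ T, v j ^ 2 ≤ T.card * 4 := by linarith
        _ ≤ s * 4 := by
            have := hcard
            push_cast
            exact mul_le_mul_of_nonneg_right (by exact_mod_cast hcard) (by norm_num)
        _ = 4 * s := by ring
    have hnorm : ‖v‖ = Real.sqrt (∑ j, v j ^ 2) := by
      rw [EuclideanSpace.norm_eq]
      congr 1
      apply Finset.sum_congr rfl
      intro j _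
      simp [Real.norm_eq_abs, sq_abs]
    rw [hnorm]
    have : Real.sqrt (∑ j, v j ^ 2) ≤ Real.sqrt (4 * s) := Real.sqrt_le_sqrt hsum
    calc Real.sqrt (∑ j, v j ^ 2) ≤ Real.sqrt (4 * s) := this
      _ = 2 * Real.sqrt s := by
          rw [Real.sqrt_mul (by norm_num : (0:ℝ) ≤ 4),
            show (4:ℝ) = 2^2 by norm_num, Real.sqrt_sq (by norm_num : (0:ℝ) ≤ 2)]
    -- done
  have hnu : ‖u‖ ≤ 2 * Real.sqrt s + α := by
    calc ‖u‖ ≤ ‖v‖ + ‖e‖ := norm_add_le v e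
      _ ≤ 2 * Real.sqrt s + α := add_le_add hnv hα
  have hden : 0 < 2 * Real.sqrt s + α := by
    have hs1 : (1:ℝ) ≤ Real.sqrt s := by
      rw [show (1:ℝ) = Real.sqrt 1 by simp]
      exact Real.sqrt_le_sqrt (by exact_mod_cast hs)
    linarith
  -- Cauchy-Schwarz
  have hcs : u i ≤ ‖p‖ * ‖u‖ := by
    rw [← hinner]
    exact real_inner_le_norm p u
  have key : 2 - α ≤ ‖p‖ * (2 * Real.sqrt s + α) := by
    calc 2 - α ≤ u i := hui
      _ ≤ ‖p‖ * ‖u‖ := hcs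
      _ ≤ ‖p‖ * (2 * Real.sqrt s + α) :=
          mul_le_mul_of_nonneg_left hnu (norm_nonneg _)
  have hfrac : (2 - α) / (2 * Real.sqrt s + α) ≤ ‖p‖ := by
    rw [div_le_iff₀ hden]; exact key
  have hfrac0 : 0 ≤ (2 - α) / (2 * Real.sqrt s + α) :=
    div_nonneg (by linarith) hden.le
  calc (2 - α) ^ 2 / (2 * Real.sqrt s + α) ^ 2
      = ((2 - α) / (2 * Real.sqrt s + α)) ^ 2 := by rw [div_pow]
    _ ≤ ‖p‖ ^ 2 := pow_le_pow_left₀ hfrac0 hfrac 2
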